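/- arXiv:2105.00760 — 3 statements merged into one kernel-verified Lean document; each statement's English description precedes it below -/
import Mathlib

section
/- The Lagrangian dual of the dual is the primal: under assumption (F), for every x ∈ ℝ^n the quantity sup over λ ∈ ℝ^I with λ ≥ 0 and w₀,…,w_I ∈ ℝ^n of [ −f₀*(w₀) − Σ_{i=1}^I λ_i f_i*(w_i/λ_i) + Σ_{i=0}^I w_iᵀx ] equals f₀(x) if f_i(x) ≤ 0 for all i = 1,…,I, and equals +∞ otherwise. Consequently, the Lagrangian dual of problem (D), obtained by minimizing this quantity over x ∈ ℝ^n, is equivalent to problem (P). -/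
noncomputable section
open scoped BigOperators Classical

/-- Dot product on `ℝ^n`. -/
def dotp {n : ℕ} (x y : Fin n → ℝ) : ℝ := ∑ i, x i * y i

/-- The (effective) domain of an extended-real-valued function. -/
def edom {n : ℕ} (f : (Fin n → ℝ) → EReal) : Set (Fin n → ℝ) := {x | f x < ⊤}

/-- `f` is proper: it never takes the value `−∞` and is `< +∞` somewhere. -/
def ProperFn {n : ℕ} (f : (Fin n → ℝ) → EReal) : Prop := (∀ x, f x ≠ ⊥) ∧ (∃ x, f x ≠ ⊤)

/-- `f` is closed: lower semicontinuous, and either nowhere `−∞` or identically `−∞`. -/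
def ClosedFn {n : ℕ} (f : (Fin n → ℝ) → EReal) : Prop :=
  LowerSemicontinuous f ∧ ((∀ x, f x ≠ ⊥) ∨ (∀ x, f x = ⊥))

/-- Convexity of an extended-real-valued function, via convexity of its epigraph. -/
def ConvexFn {n : ℕ} (f : (Fin n → ℝ) → EReal) : Prop :=
  Convex ℝ {p : (Fin n → ℝ) × ℝ | f p.1 ≤ (p.2 : EReal)}

/-- The conjugate `f*(w) = sup_x { wᵀx − f(x) }`. -/
def conjFn {n : ℕ} (f : (Fin n → ℝ) → EReal) (w : Fin n → ℝ) : EReal :=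
  ⨆ x : Fin n → ℝ, (((dotp w x : ℝ) : EReal) - f x)

/-- The support function `δ*_X(w) = sup_{x ∈ X} xᵀw`. -/
def suppFn {n : ℕ} (X : Set (Fin n → ℝ)) (w : Fin n → ℝ) : EReal :=
  ⨆ x ∈ X, ((dotp x w : ℝ) : EReal)

/-- The convex perspective `t f(x/t)` of a proper closed convex function `f`,
equal to `t f(x/t)` for `t > 0` and to `δ*_{dom f*}(x)` for `t = 0`. -/
def persp {n : ℕ} (f : (Fin n → ℝ) → EReal) (x : Fin n → ℝ) (t : ℝ) : EReal :=
  if 0 < t then (t : EReal) * f (t⁻¹ • x) else suppFn (edom (conjFn f)) x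

variable {n I : ℕ}

/-- Assumption (F): each `f_i`, `i = 0, 1, …, I`, is proper, closed and convex. -/
def AssumptionF (f : Fin (I + 1) → (Fin n → ℝ) → EReal) : Prop :=
  ∀ i, ProperFn (f i) ∧ ClosedFn (f i) ∧ ConvexFn (f i)

/-- Feasible region of the primal problem (P): the constraints `f_i(x) ≤ 0` hold for
`i = 1, …, I` and the objective value is not `+∞`. -/
def primalFeas (f : Fin (I + 1) → (Fin n → ℝ) → EReal) : Set (Fin n → ℝ) :=
  {x | (∀ i : Fin I, f i.succ x ≤ 0) ∧ f 0 x ≠ ⊤}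

/-- Optimal value of the primal problem (P) (`+∞` if (P) is infeasible). -/
def primalVal (f : Fin (I + 1) → (Fin n → ℝ) → EReal) : EReal :=
  ⨅ x ∈ primalFeas f, f 0 x

/-- (P) is solvable: it is infeasible, or a feasible point attains the optimal value. -/
def primalSolvable (f : Fin (I + 1) → (Fin n → ℝ) → EReal) : Prop :=
  primalFeas f = ∅ ∨ ∃ x ∈ primalFeas f, f 0 x = primalVal f

/-- Objective of the dual problem (D):
`−f₀*(w₀) − Σ_{i=1}^I λ_i f_i*(w_i/λ_i)` (perspectives of the conjugates). -/
def dualObj (f : Fin (I + 1) → (Fin n → ℝ) → EReal)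
    (w : Fin (I + 1) → Fin n → ℝ) (lam : Fin I → ℝ) : EReal :=
  - conjFn (f 0) (w 0) - ∑ i : Fin I, persp (conjFn (f i.succ)) (w i.succ) (lam i)

/-- Feasible region of the dual problem (D): `Σ_i w_i = 0`, `λ ≥ 0`, and the
objective value is not `−∞`. -/
def dualFeas (f : Fin (I + 1) → (Fin n → ℝ) → EReal) :
    Set ((Fin (I + 1) → Fin n → ℝ) × (Fin I → ℝ)) :=
  {p | (∑ i, p.1 i) = 0 ∧ (∀ i, 0 ≤ p.2 i) ∧ dualObj f p.1 p.2 ≠ ⊥}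

/-- Optimal value of the dual problem (D) (`−∞` if (D) is infeasible). -/
def dualVal (f : Fin (I + 1) → (Fin n → ℝ) → EReal) : EReal :=
  ⨆ p ∈ dualFeas f, dualObj f p.1 p.2

/-- (D) is solvable: it is infeasible, or a feasible point attains the optimal value. -/
def dualSolvable (f : Fin (I + 1) → (Fin n → ℝ) → EReal) : Prop :=
  dualFeas f = ∅ ∨ ∃ p ∈ dualFeas f, dualObj f p.1 p.2 = dualVal f

/-- `f` is an affine ("linear") constraint function. -/
def IsAffineFn {n : ℕ} (f : (Fin n → ℝ) → EReal) : Prop :=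
  ∃ (a : Fin n → ℝ) (b : ℝ), ∀ x, f x = ((dotp a x + b : ℝ) : EReal)

/-- Slater point of the primal problem (P): `xS` lies in the relative interior of the
domains of `f₀, …, f_I`, is feasible, and satisfies every nonlinear inequality
constraint strictly. -/
def SlaterPrimal (f : Fin (I + 1) → (Fin n → ℝ) → EReal) (xS : Fin n → ℝ) : Prop :=
  (∀ i : Fin (I + 1), xS ∈ intrinsicInterior ℝ (edom (f i))) ∧
  (∀ i : Fin I, f i.succ xS ≤ 0) ∧
  (∀ i : Fin I, ¬ IsAffineFn (f i.succ) → f i.succ xS < 0)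

/-- Slater point of the dual problem (D) (a maximization problem whose explicit
constraints are the affine equalities `Σ_i w_i = 0` and the linear inequalities
`λ ≥ 0`): a feasible point in the relative interior of the domain of minus the
objective. -/
def SlaterDual (f : Fin (I + 1) → (Fin n → ℝ) → EReal)
    (p : (Fin (I + 1) → Fin n → ℝ) × (Fin I → ℝ)) : Prop :=
  p ∈ intrinsicInterior ℝ
      {q : (Fin (I + 1) → Fin n → ℝ) × (Fin I → ℝ) | dualObj f q.1 q.2 ≠ ⊥} ∧
  (∑ i, p.1 i) = 0 ∧ (∀ i, 0 ≤ p.2 i)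

/-- Strict Slater point of the dual problem (D): additionally all inequality
constraints `λ ≥ 0` hold strictly. -/
def StrictSlaterDual (f : Fin (I + 1) → (Fin n → ℝ) → EReal)
    (p : (Fin (I + 1) → Fin n → ℝ) × (Fin I → ℝ)) : Prop :=
  SlaterDual f p ∧ ∀ i, 0 < p.2 i

namespace FMaux

variable {n : ℕ}

lemma dotp_comm (x y : Fin n → ℝ) : dotp x y = dotp y x :=
  Finset.sum_congr rfl fun i _ => mul_comm _ _

lemma dotp_zero_left (y : Fin n → ℝ) : dotp 0 y = 0 := by simp [dotp]

lemma dotp_zero_right (x : Fin n → ℝ) : dotp x 0 = 0 := by simp [dotp]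

lemma dotp_smul_left (t : ℝ) (x y : Fin n → ℝ) : dotp (t • x) y = t * dotp x y := by
  simp [dotp, Finset.mul_sum, mul_assoc]

lemma dotp_sub_left (x x' y : Fin n → ℝ) : dotp (x - x') y = dotp x y - dotp x' y := by
  simp [dotp, sub_mul, Finset.sum_sub_distrib]

lemma ereal_le_of_forall_real_lt {a b : EReal} (h : ∀ r : ℝ, (r : EReal) < a → (r : EReal) ≤ b) :
    a ≤ b := by
  by_contra hc
  push_neg at hc
  obtain ⟨r, hbr, hra⟩ := EReal.exists_between_coe_real hc
  exact absurd (h r hra) (not_le.2 hbr)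

lemma ereal_eq_top_of_forall_real_le {a : EReal} (h : ∀ r : ℝ, (r : EReal) ≤ a) : a = ⊤ := by
  by_contra hc
  obtain ⟨r, har, _⟩ := EReal.exists_between_coe_real (lt_top_iff_ne_top.2 hc)
  exact absurd (h r) (not_le.2 har)

lemma ereal_trichot (e : EReal) : e = ⊥ ∨ (∃ s : ℝ, e = (s : EReal)) ∨ e = ⊤ := by
  induction e using EReal.rec with
  | bot => exact Or.inl rfl
  | coe c => exact Or.inr (Or.inl ⟨c, rfl⟩)
  | top => exact Or.inr (Or.inr rfl)

lemma ereal_exists_real {e : EReal} (h1 : e ≠ ⊥) (h2 : e ≠ ⊤) : ∃ c : ℝ, e = (c : EReal) := by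
  induction e using EReal.rec with
  | bot => exact absurd rfl h1
  | coe c => exact ⟨c, rfl⟩
  | top => exact absurd rfl h2

lemma ereal_coe_sub_top (a : ℝ) : (a : EReal) - ⊤ = ⊥ := by
  rw [sub_eq_add_neg, EReal.neg_top, EReal.add_bot]

lemma coe_sum {α : Type*} (s : Finset α) (g : α → ℝ) :
    ((∑ i ∈ s, g i : ℝ) : EReal) = ∑ i ∈ s, ((g i : ℝ) : EReal) := by
  induction s using Finset.cons_induction with
  | empty => simp
  | cons a s ha ih => rw [Finset.sum_cons, Finset.sum_cons, EReal.coe_add, ih]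

lemma neg_add_le_zero_of_le {r : ℝ} {b : EReal} (h : (r : EReal) ≤ b) : -b + (r : EReal) ≤ 0 := by
  have h1 : -b ≤ ((-r : ℝ) : EReal) := by
    rw [EReal.coe_neg]; exact EReal.neg_le_neg_iff.mpr h
  calc -b + (r : EReal) ≤ ((-r : ℝ) : EReal) + (r : EReal) := add_le_add_left h1 _
    _ = ((-r + r : ℝ) : EReal) := (EReal.coe_add _ _).symm
    _ = 0 := by norm_num

lemma coe_mul_le {t c : ℝ} (ht : 0 < t) {b : EReal} (h : (c : EReal) ≤ b) :
    ((t * c : ℝ) : EReal) ≤ (t : EReal) * b := by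
  induction b using EReal.rec with
  | bot => simp at h
  | coe s =>
      rw [← EReal.coe_mul]
      exact EReal.coe_le_coe_iff.2 (mul_le_mul_of_nonneg_left (EReal.coe_le_coe_iff.1 h) ht.le)
  | top => rw [EReal.coe_mul_top_of_pos ht]; exact le_top

lemma ereal_sub_le_of_sub_le {a : ℝ} {b c : EReal} (h : (a : EReal) - c ≤ b) :
    (a : EReal) - b ≤ c := by
  induction b using EReal.rec with
  | bot =>
      induction c using EReal.rec with
      | bot => simp [EReal.coe_sub_bot] at h
      | coe s => rw [← EReal.coe_sub, le_bot_iff] at h; exact absurd h (EReal.coe_ne_bot _)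
      | top => exact le_top
  | coe u =>
      induction c using EReal.rec with
      | bot => rw [EReal.coe_sub_bot] at h; simp at h
      | coe s =>
          rw [← EReal.coe_sub] at h ⊢
          exact EReal.coe_le_coe_iff.2 (by linarith [EReal.coe_le_coe_iff.1 h])
      | top => exact le_top
  | top => rw [ereal_coe_sub_top]; exact bot_le

lemma coe_sub_ne_bot {a : ℝ} {c : EReal} (hc : c ≠ ⊤) : (a : EReal) - c ≠ ⊥ := by
  induction c using EReal.rec with
  | bot => simp [EReal.coe_sub_bot]
  | coe s => rw [← EReal.coe_sub]; exact EReal.coe_ne_bot _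
  | top => exact absurd rfl hc

lemma term_le (f : (Fin n → ℝ) → EReal) (w x : Fin n → ℝ) :
    ((dotp w x : ℝ) : EReal) - conjFn f w ≤ f x :=
  ereal_sub_le_of_sub_le (le_iSup (fun y => ((dotp w y : ℝ) : EReal) - f y) x)

lemma conj_ne_bot {f : (Fin n → ℝ) → EReal} (hf : ∃ x, f x ≠ ⊤) (w : Fin n → ℝ) :
    conjFn f w ≠ ⊥ := by
  obtain ⟨x₀, hx₀⟩ := hf
  intro h
  have h1 : ((dotp w x₀ : ℝ) : EReal) - f x₀ ≤ conjFn f w :=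
    le_iSup (fun y => ((dotp w y : ℝ) : EReal) - f y) x₀
  rw [h, le_bot_iff] at h1
  exact coe_sub_ne_bot hx₀ h1

section Main

variable {f : (Fin n → ℝ) → EReal}

lemma epi_closed (hlsc : LowerSemicontinuous f) :
    IsClosed {p : (Fin n → ℝ) × ℝ | f p.1 ≤ (p.2 : EReal)} := by
  rw [← isOpen_compl_iff, isOpen_iff_mem_nhds]
  rintro ⟨x, s⟩ hp
  simp only [Set.mem_compl_iff, Set.mem_setOf_eq, not_le] at hp
  obtain ⟨q, hsq, hqf⟩ := EReal.exists_between_coe_real hp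
  have h1 : {z | (q : EReal) < f z} ∈ nhds x := hlsc x _ hqf
  have h2 : Set.Iio q ∈ nhds s := Iio_mem_nhds (EReal.coe_lt_coe_iff.1 hsq)
  rw [nhds_prod_eq]
  filter_upwards [Filter.prod_mem_prod h1 h2] with z hz
  simp only [Set.mem_compl_iff, Set.mem_setOf_eq, not_le]
  exact lt_trans (EReal.coe_lt_coe_iff.2 hz.2) hz.1

lemma clf_decomp (g : ((Fin n → ℝ) × ℝ) →L[ℝ] ℝ) :
    ∃ (a : Fin n → ℝ) (b : ℝ), ∀ y s, g (y, s) = dotp a y + b * s := by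
  refine ⟨fun i => g (Pi.single i 1, 0), g (0, 1), fun y s => ?_⟩
  have hy : ((y, s) : (Fin n → ℝ) × ℝ)
      = (∑ i, y i • ((Pi.single i (1 : ℝ), 0) : (Fin n → ℝ) × ℝ)) + s • ((0, 1) : (Fin n → ℝ) × ℝ) := by
    refine Prod.ext ?_ ?_
    · simp only [Prod.fst_add, Prod.fst_sum, Prod.smul_fst, smul_zero, add_zero]
      ext j
      simp [Pi.single_apply]
    · simp [Prod.snd_sum]
  rw [hy, map_add, map_sum, map_smul]
  simp only [map_smul, smul_eq_mul]
  rw [dotp]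
  rw [Finset.sum_congr rfl fun i _ => mul_comm (y i) (g (Pi.single i 1, 0))]
  ring

lemma sep (hprop : ProperFn f) (hlsc : LowerSemicontinuous f) (hconv : ConvexFn f)
    (x : Fin n → ℝ) (r : ℝ) (hx : ¬ f x ≤ (r : EReal)) :
    ∃ (a : Fin n → ℝ) (b c : ℝ), 0 ≤ b ∧ dotp a x + b * r < c ∧
      ∀ y (s : ℝ), f y ≤ (s : EReal) → c < dotp a y + b * s := by
  obtain ⟨g, c, hgx, hgC⟩ :=
    geometric_hahn_banach_point_closed (t := {p : (Fin n → ℝ) × ℝ | f p.1 ≤ (p.2 : EReal)})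
      hconv (epi_closed hlsc) (show ((x, r) : (Fin n → ℝ) × ℝ) ∉ {p : (Fin n → ℝ) × ℝ | f p.1 ≤ (p.2 : EReal)} from hx)
  obtain ⟨a, b, hab⟩ := clf_decomp g
  obtain ⟨x₀, hx₀⟩ := hprop.2
  obtain ⟨s₀, hs₀⟩ := ereal_exists_real (hprop.1 x₀) hx₀
  have hmem0 : ∀ t : ℝ, 0 ≤ t → ((x₀, s₀ + t) : (Fin n → ℝ) × ℝ) ∈
      {p : (Fin n → ℝ) × ℝ | f p.1 ≤ (p.2 : EReal)} := by
    intro t ht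
    show f x₀ ≤ ((s₀ + t : ℝ) : EReal)
    rw [hs₀]
    exact EReal.coe_le_coe_iff.2 (by linarith)
  have hc0 : c < dotp a x₀ + b * s₀ := by
    have := hgC _ (hmem0 0 le_rfl)
    rw [hab] at this
    simpa using this
  have hb : 0 ≤ b := by
    by_contra hbneg
    push_neg at hbneg
    have hbne : b ≠ 0 := ne_of_lt hbneg
    set t := (dotp a x₀ + b * s₀ - c + 1) / (-b) with htdef
    have ht : 0 ≤ t := div_nonneg (by linarith) (by linarith)
    have h2 := hgC _ (hmem0 t ht)
    rw [hab] at h2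
    have h6 : t * -b = dotp a x₀ + b * s₀ - c + 1 := by
      rw [htdef]
      exact div_mul_cancel₀ _ (by linarith)
    nlinarith [h2, h6]
  refine ⟨a, b, c, hb, ?_, ?_⟩
  · have := hgx
    rwa [hab] at this
  · intro y s hys
    have := hgC (y, s) hys
    rwa [hab] at this

lemma conj_bound (hne : ∀ y, f y ≠ ⊥) (a : Fin n → ℝ) (b c : ℝ) (hb : 0 < b)
    (h : ∀ y (s : ℝ), f y ≤ (s : EReal) → c < dotp a y + b * s) :
    conjFn f ((-b⁻¹) • a) ≤ ((-(c / b) : ℝ) : EReal) := by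
  rw [conjFn]
  apply iSup_le
  intro y
  rcases ereal_trichot (f y) with hfy | ⟨s, hfy⟩ | hfy
  · exact absurd hfy (hne y)
  · have h3 : c < dotp a y + b * s := h y s (le_of_eq hfy)
    rw [hfy, ← EReal.coe_sub]
    apply EReal.coe_le_coe_iff.2
    rw [dotp_smul_left]
    have hb0 : b ≠ 0 := ne_of_gt hb
    rw [← sub_nonneg]
    have heq : -(c / b) - (-b⁻¹ * dotp a y - s) = b⁻¹ * (dotp a y + b * s - c) := by
      field_simp
      ring
    rw [heq]
    exact mul_nonneg (inv_nonneg.2 hb.le) (by linarith)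
  · rw [hfy, ereal_coe_sub_top]; exact bot_le

lemma dom_conj (hprop : ProperFn f) (hlsc : LowerSemicontinuous f) (hconv : ConvexFn f) :
    ∃ (w : Fin n → ℝ) (M : ℝ), conjFn f w ≤ (M : EReal) := by
  obtain ⟨x₀, hx₀⟩ := hprop.2
  obtain ⟨s₀, hs₀⟩ := ereal_exists_real (hprop.1 x₀) hx₀
  have hx : ¬ f x₀ ≤ ((s₀ - 1 : ℝ) : EReal) := by
    rw [hs₀]
    exact not_le.2 (EReal.coe_lt_coe_iff.2 (by linarith))
  obtain ⟨a, b, c, hb, hlt, hgt⟩ := sep hprop hlsc hconv x₀ (s₀ - 1) hx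
  have hbpos : 0 < b := by
    have h1 := hgt x₀ s₀ (le_of_eq hs₀)
    nlinarith [hlt]
  exact ⟨_, _, conj_bound hprop.1 a b c hbpos hgt⟩

lemma key (hprop : ProperFn f) (hlsc : LowerSemicontinuous f) (hconv : ConvexFn f)
    (x : Fin n → ℝ) (r : ℝ) (hr : (r : EReal) < f x) :
    ∃ w, (r : EReal) < ((dotp w x : ℝ) : EReal) - conjFn f w := by
  obtain ⟨a, b, c, hb, hlt, hgt⟩ := sep hprop hlsc hconv x r (not_le.2 hr)
  rcases eq_or_lt_of_le hb with hb0 | hbpos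
  · -- b = 0
    obtain ⟨w₀, M, hw₀⟩ := dom_conj hprop hlsc hconv
    have hgt' : ∀ y (s : ℝ), f y ≤ (s : EReal) → c < dotp a y := by
      intro y s h
      have h5 := hgt y s h
      rw [← hb0] at h5
      simpa using h5
    have hca : dotp a x < c := by
      rw [← hb0] at hlt
      simpa using hlt
    set d := c - dotp a x with hd
    have hd0 : 0 < d := by rw [hd]; linarith
    set t := max 0 ((r + M - dotp w₀ x + 1) / d) with htdef
    have ht0 : 0 ≤ t := le_max_left _ _
    have hconj : conjFn f (w₀ - t • a) ≤ ((M - t * c : ℝ) : EReal) := by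
      rw [conjFn]
      apply iSup_le
      intro y
      rcases ereal_trichot (f y) with hfy | ⟨s, hfy⟩ | hfy
      · exact absurd hfy (hprop.1 y)
      · have h1 : (dotp w₀ y - s : ℝ) ≤ M := by
          have h2 : ((dotp w₀ y : ℝ) : EReal) - f y ≤ (M : EReal) :=
            le_trans (le_iSup (fun z => ((dotp w₀ z : ℝ) : EReal) - f z) y) hw₀
          rw [hfy, ← EReal.coe_sub] at h2
          exact_mod_cast h2
        have h3 : c < dotp a y := hgt' y s (le_of_eq hfy)
        rw [hfy, ← EReal.coe_sub]
        apply EReal.coe_le_coe_iff.2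
        rw [dotp_sub_left, dotp_smul_left]
        nlinarith [mul_le_mul_of_nonneg_left h3.le ht0]
      · rw [hfy, ereal_coe_sub_top]; exact bot_le
    have hval : (r : EReal) < ((dotp (w₀ - t • a) x : ℝ) : EReal) - ((M - t * c : ℝ) : EReal) := by
      rw [← EReal.coe_sub]
      apply EReal.coe_lt_coe_iff.2
      rw [dotp_sub_left, dotp_smul_left]
      have htd : r + M - dotp w₀ x + 1 ≤ t * d := by
        have h4 : ((r + M - dotp w₀ x + 1) / d) * d ≤ t * d :=
          mul_le_mul_of_nonneg_right (le_max_right _ _) hd0.le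
        rwa [div_mul_cancel₀ _ (ne_of_gt hd0)] at h4
      have hde : t * d = t * c - t * dotp a x := by rw [hd]; ring
      nlinarith [htd]
    exact ⟨w₀ - t • a, lt_of_lt_of_le hval (EReal.sub_le_sub (le_refl _) hconj)⟩
  · -- b > 0
    refine ⟨(-b⁻¹) • a, ?_⟩
    have hconj := conj_bound hprop.1 a b c hbpos hgt
    have hval : (r : EReal) < ((dotp ((-b⁻¹) • a) x : ℝ) : EReal) - ((-(c / b) : ℝ) : EReal) := by
      rw [← EReal.coe_sub]
      apply EReal.coe_lt_coe_iff.2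
      rw [dotp_smul_left]
      have hb0 : b ≠ 0 := ne_of_gt hbpos
      rw [← sub_pos]
      have heq : -b⁻¹ * dotp a x - -(c / b) - r = b⁻¹ * (c - dotp a x - b * r) := by
        field_simp
        ring
      rw [heq]
      exact mul_pos (inv_pos.2 hbpos) (by linarith)
    exact lt_of_lt_of_le hval (EReal.sub_le_sub (le_refl _) hconj)

lemma biconj (hprop : ProperFn f) (hlsc : LowerSemicontinuous f) (hconv : ConvexFn f)
    (x : Fin n → ℝ) : (⨆ w, (((dotp w x : ℝ) : EReal) - conjFn f w)) = f x := by
  apply le_antisymm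
  · exact iSup_le fun w => term_le f w x
  · apply ereal_le_of_forall_real_lt
    intro r hr
    obtain ⟨w, hw⟩ := key hprop hlsc hconv x r hr
    exact le_trans hw.le (le_iSup (fun w => ((dotp w x : ℝ) : EReal) - conjFn f w) w)

lemma biconj' (hprop : ProperFn f) (hlsc : LowerSemicontinuous f) (hconv : ConvexFn f)
    (x : Fin n → ℝ) : conjFn (conjFn f) x = f x := by
  rw [← biconj hprop hlsc hconv x, conjFn]
  exact iSup_congr fun w => by rw [dotp_comm]

lemma persp_zero_zero (hprop : ProperFn f) (hlsc : LowerSemicontinuous f) (hconv : ConvexFn f) :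
    persp (conjFn f) 0 0 = 0 := by
  rw [persp, if_neg (lt_irrefl (0 : ℝ))]
  obtain ⟨x₀, hx₀⟩ := hprop.2
  have hmem : x₀ ∈ edom (conjFn (conjFn f)) := by
    rw [edom, Set.mem_setOf_eq, biconj' hprop hlsc hconv]
    exact lt_top_iff_ne_top.2 hx₀
  rw [suppFn]
  apply le_antisymm
  · exact iSup₂_le fun y _ => by simp [dotp_zero_right]
  · have h := le_iSup₂ (f := fun (y : Fin n → ℝ) (_ : y ∈ edom (conjFn (conjFn f))) =>
      ((dotp y (0 : Fin n → ℝ) : ℝ) : EReal)) x₀ hmem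
    refine le_trans ?_ h
    simp [dotp_zero_right]

lemma dotp_le_persp (hprop : ProperFn f) (hlsc : LowerSemicontinuous f) (hconv : ConvexFn f)
    (x : Fin n → ℝ) (hx : f x ≤ 0) (u : Fin n → ℝ) {t : ℝ} (ht : 0 ≤ t) :
    ((dotp u x : ℝ) : EReal) ≤ persp (conjFn f) u t := by
  rcases eq_or_lt_of_le ht with h0 | hpos
  · rw [persp, if_neg (by rw [← h0]; exact lt_irrefl (0 : ℝ))]
    have hmem : x ∈ edom (conjFn (conjFn f)) := by
      rw [edom, Set.mem_setOf_eq, biconj' hprop hlsc hconv]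
      exact lt_of_le_of_lt hx (by norm_num)
    rw [suppFn, dotp_comm u x]
    exact le_iSup₂ (f := fun (y : Fin n → ℝ) (_ : y ∈ edom (conjFn (conjFn f))) =>
      ((dotp y u : ℝ) : EReal)) x hmem
  · rw [persp, if_pos hpos]
    set v := t⁻¹ • u with hv
    have hu : u = t • v := by
      rw [hv, smul_smul, mul_inv_cancel₀ (ne_of_gt hpos), one_smul]
    have h1 : ((dotp v x : ℝ) : EReal) ≤ conjFn f v := by
      have h2 : ((dotp v x : ℝ) : EReal) - f x ≤ conjFn f v :=
        le_iSup (fun y => ((dotp v y : ℝ) : EReal) - f y) x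
      refine le_trans ?_ h2
      calc ((dotp v x : ℝ) : EReal) = ((dotp v x : ℝ) : EReal) - 0 := (sub_zero _).symm
        _ ≤ ((dotp v x : ℝ) : EReal) - f x := EReal.sub_le_sub (le_refl _) hx
    calc ((dotp u x : ℝ) : EReal) = ((t * dotp v x : ℝ) : EReal) := by
          rw [hu, dotp_smul_left]
      _ ≤ (t : EReal) * conjFn f v := coe_mul_le hpos h1

lemma exists_pos_dir (hprop : ProperFn f) (hlsc : LowerSemicontinuous f) (hconv : ConvexFn f)
    (x : Fin n → ℝ) (hx : ¬ f x ≤ 0) :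
    ∃ (v : Fin n → ℝ) (c : ℝ), conjFn f v = (c : EReal) ∧ c < dotp v x := by
  rw [not_le] at hx
  have h0 : ((0 : ℝ) : EReal) < f x := by rwa [EReal.coe_zero]
  obtain ⟨w, hw⟩ := key hprop hlsc hconv x 0 h0
  have hnb : conjFn f w ≠ ⊥ := conj_ne_bot hprop.2 w
  have hnt : conjFn f w ≠ ⊤ := by
    intro h
    rw [h, ereal_coe_sub_top] at hw
    exact absurd hw (not_lt.2 bot_le)
  obtain ⟨c, hc⟩ := ereal_exists_real hnb hnt
  refine ⟨w, c, hc, ?_⟩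
  rw [hc, ← EReal.coe_sub] at hw
  have := EReal.coe_lt_coe_iff.1 hw
  linarith

lemma persp_smul (t : ℝ) (ht : 0 < t) (v : Fin n → ℝ) :
    persp (conjFn f) (t • v) t = (t : EReal) * conjFn f v := by
  rw [persp, if_pos ht, smul_smul, inv_mul_cancel₀ (ne_of_gt ht), one_smul]

end Main

end FMaux

/-- **The Lagrangian dual of the dual is the primal** (Lemma A.1): under assumption (F),
for every `x` the supremum over `λ ≥ 0` and `w₀, …, w_I` of
`−f₀*(w₀) − Σ_i λ_i f_i*(w_i/λ_i) + Σ_i w_iᵀx` equals `f₀(x)` if `f_i(x) ≤ 0` for all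
`i = 1, …, I` and `+∞` otherwise; consequently, minimizing this quantity over `x`
recovers the optimal value of (P). -/
theorem lagrangian_dual_of_dual_is_primal (n I : ℕ)
    (f : Fin (I + 1) → (Fin n → ℝ) → EReal) (hF : AssumptionF f) :
    (∀ x : Fin n → ℝ,
      (⨆ p ∈ {q : (Fin (I + 1) → Fin n → ℝ) × (Fin I → ℝ) | ∀ i, 0 ≤ q.2 i},
          dualObj f p.1 p.2 + ((∑ i : Fin (I + 1), dotp (p.1 i) x : ℝ) : EReal))
        = if ∀ i : Fin I, f i.succ x ≤ 0 then f 0 x else ⊤) ∧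
    (⨅ x : Fin n → ℝ,
        (⨆ p ∈ {q : (Fin (I + 1) → Fin n → ℝ) × (Fin I → ℝ) | ∀ i, 0 ≤ q.2 i},
          dualObj f p.1 p.2 + ((∑ i : Fin (I + 1), dotp (p.1 i) x : ℝ) : EReal)))
      = primalVal f := by
  have hP : ∀ i, ProperFn (f i) := fun i => (hF i).1
  have hL : ∀ i, LowerSemicontinuous (f i) := fun i => (hF i).2.1.1
  have hC : ∀ i, ConvexFn (f i) := fun i => (hF i).2.2
  have main : ∀ x : Fin n → ℝ,
      (⨆ p ∈ {q : (Fin (I + 1) → Fin n → ℝ) × (Fin I → ℝ) | ∀ i, 0 ≤ q.2 i},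
          dualObj f p.1 p.2 + ((∑ i : Fin (I + 1), dotp (p.1 i) x : ℝ) : EReal))
        = if ∀ i : Fin I, f i.succ x ≤ 0 then f 0 x else ⊤ := by
    intro x
    by_cases hfe : ∀ i : Fin I, f i.succ x ≤ 0
    · rw [if_pos hfe]
      apply le_antisymm
      · apply iSup₂_le
        rintro ⟨w, lam⟩ hp
        have hp' : ∀ i, 0 ≤ lam i := hp
        have h1 : -conjFn (f 0) (w 0) + ((dotp (w 0) x : ℝ) : EReal) ≤ f 0 x := by
          have h := FMaux.term_le (f 0) (w 0) x
          rwa [sub_eq_add_neg, add_comm] at h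
        have h3 : ((∑ i : Fin I, dotp (w i.succ) x : ℝ) : EReal)
            ≤ ∑ i : Fin I, persp (conjFn (f i.succ)) (w i.succ) (lam i) := by
          rw [FMaux.coe_sum]
          exact Finset.sum_le_sum fun i _ =>
            FMaux.dotp_le_persp (hP i.succ) (hL i.succ) (hC i.succ) x (hfe i) _ (hp' i)
        have h4 : -(∑ i : Fin I, persp (conjFn (f i.succ)) (w i.succ) (lam i))
            + ((∑ i : Fin I, dotp (w i.succ) x : ℝ) : EReal) ≤ 0 :=
          FMaux.neg_add_le_zero_of_le h3
        have hsplit : ((∑ i : Fin (I + 1), dotp (w i) x : ℝ) : EReal)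
            = ((dotp (w 0) x : ℝ) : EReal) + ((∑ i : Fin I, dotp (w i.succ) x : ℝ) : EReal) := by
          rw [Fin.sum_univ_succ, EReal.coe_add]
        calc dualObj f (w, lam).1 (w, lam).2
              + ((∑ i : Fin (I + 1), dotp ((w, lam).1 i) x : ℝ) : EReal)
            = (-conjFn (f 0) (w 0) + ((dotp (w 0) x : ℝ) : EReal))
              + (-(∑ i : Fin I, persp (conjFn (f i.succ)) (w i.succ) (lam i))
                + ((∑ i : Fin I, dotp (w i.succ) x : ℝ) : EReal)) := by
              rw [dualObj, hsplit, sub_eq_add_neg]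
              exact add_add_add_comm _ _ _ _
          _ ≤ f 0 x + 0 := add_le_add h1 h4
          _ = f 0 x := add_zero _
      · apply FMaux.ereal_le_of_forall_real_lt
        intro r hr
        obtain ⟨w, hw⟩ := FMaux.key (hP 0) (hL 0) (hC 0) x r hr
        set p : (Fin (I + 1) → Fin n → ℝ) × (Fin I → ℝ) :=
          (fun j => if j = 0 then w else 0, fun _ => 0) with hpdef
        have hmem : p ∈ {q : (Fin (I + 1) → Fin n → ℝ) × (Fin I → ℝ) | ∀ i, 0 ≤ q.2 i} :=
          fun _ => le_refl 0
        refine le_trans ?_ (le_iSup₂ p hmem)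
        have hA : p.1 0 = w := by
          show (if (0 : Fin (I + 1)) = 0 then w else 0) = w
          exact if_pos rfl
        have hB : ∀ i : Fin I, p.1 i.succ = 0 := by
          intro i
          show (if i.succ = 0 then w else 0) = 0
          exact if_neg (Fin.succ_ne_zero i)
        have hobj : dualObj f p.1 p.2 = -conjFn (f 0) w := by
          rw [dualObj, hA]
          have hz : ∀ i ∈ Finset.univ,
              persp (conjFn (f (i : Fin I).succ)) (p.1 i.succ) (p.2 i) = 0 := by
            intro i _
            rw [hB i]
            exact FMaux.persp_zero_zero (hP i.succ) (hL i.succ) (hC i.succ)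
          rw [Finset.sum_congr rfl hz, Finset.sum_const_zero, sub_zero]
        have hdot : (∑ i : Fin (I + 1), dotp (p.1 i) x) = dotp w x := by
          rw [Fin.sum_univ_succ, hA]
          have hz : ∀ i ∈ Finset.univ, dotp (p.1 (i : Fin I).succ) x = 0 := by
            intro i _
            rw [hB i, FMaux.dotp_zero_left]
          rw [Finset.sum_congr rfl hz, Finset.sum_const_zero, add_zero]
        rw [hobj, hdot, add_comm, ← sub_eq_add_neg]
        exact hw.le
    · rw [if_neg hfe]
      apply FMaux.ereal_eq_top_of_forall_real_le
      intro K
      push_neg at hfe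
      obtain ⟨i₀, hi₀⟩ := hfe
      obtain ⟨v, c, hvc, hvx⟩ :=
        FMaux.exists_pos_dir (hP i₀.succ) (hL i₀.succ) (hC i₀.succ) x (not_le.2 hi₀)
      obtain ⟨u₀, M, hu₀⟩ := FMaux.dom_conj (hP 0) (hL 0) (hC 0)
      have hnt : conjFn (f 0) u₀ ≠ ⊤ := ne_top_of_le_ne_top (EReal.coe_ne_top M) hu₀
      obtain ⟨c₀, hc₀⟩ := FMaux.ereal_exists_real (FMaux.conj_ne_bot (hP 0).2 u₀) hnt
      set d := dotp v x - c with hd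
      have hd0 : 0 < d := by rw [hd]; linarith
      set t := max 1 ((K - dotp u₀ x + c₀) / d) with htdef
      have ht0 : (0 : ℝ) < t := lt_of_lt_of_le one_pos (le_max_left _ _)
      set p : (Fin (I + 1) → Fin n → ℝ) × (Fin I → ℝ) :=
        (fun j => if j = 0 then u₀ else if j = i₀.succ then t • v else 0,
         fun i => if i = i₀ then t else 0) with hpdef
      have hmem : p ∈ {q : (Fin (I + 1) → Fin n → ℝ) × (Fin I → ℝ) | ∀ i, 0 ≤ q.2 i} := by
        intro i
        show (0 : ℝ) ≤ if i = i₀ then t else 0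
        split
        · exact ht0.le
        · exact le_refl 0
      refine le_trans ?_ (le_iSup₂ p hmem)
      have hA : p.1 0 = u₀ := by
        show (if (0 : Fin (I + 1)) = 0 then u₀ else if (0 : Fin (I + 1)) = i₀.succ then t • v else 0) = u₀
        exact if_pos rfl
      have hBi : p.1 i₀.succ = t • v := by
        show (if i₀.succ = 0 then u₀ else if i₀.succ = i₀.succ then t • v else 0) = t • v
        rw [if_neg (Fin.succ_ne_zero i₀), if_pos rfl]
      have hBo : ∀ j : Fin I, j ≠ i₀ → p.1 j.succ = 0 := by
        intro j hj
        show (if j.succ = 0 then u₀ else if j.succ = i₀.succ then t • v else 0) = 0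
        rw [if_neg (Fin.succ_ne_zero j), if_neg (fun h => hj (Fin.succ_inj.1 h))]
      have hlami : p.2 i₀ = t := by
        show (if i₀ = i₀ then t else 0) = t
        exact if_pos rfl
      have hlamo : ∀ j : Fin I, j ≠ i₀ → p.2 j = 0 := by
        intro j hj
        show (if j = i₀ then t else 0) = 0
        exact if_neg hj
      have hsum : ∑ i : Fin I, persp (conjFn (f i.succ)) (p.1 i.succ) (p.2 i)
          = ((t * c : ℝ) : EReal) := by
        have h0 : ∀ j ∈ Finset.univ, j ≠ i₀ →
            persp (conjFn (f (j : Fin I).succ)) (p.1 j.succ) (p.2 j) = 0 := by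
          intro j _ hj
          rw [hBo j hj, hlamo j hj]
          exact FMaux.persp_zero_zero (hP j.succ) (hL j.succ) (hC j.succ)
        rw [Finset.sum_eq_single i₀ h0 (fun h => absurd (Finset.mem_univ i₀) h)]
        rw [hBi, hlami, FMaux.persp_smul t ht0 v, hvc, EReal.coe_mul]
      have hdot : (∑ i : Fin (I + 1), dotp (p.1 i) x) = dotp u₀ x + t * dotp v x := by
        rw [Fin.sum_univ_succ, hA]
        congr 1
        have h0 : ∀ j ∈ Finset.univ, j ≠ i₀ → dotp (p.1 (j : Fin I).succ) x = 0 := by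
          intro j _ hj
          rw [hBo j hj, FMaux.dotp_zero_left]
        rw [Finset.sum_eq_single i₀ h0 (fun h => absurd (Finset.mem_univ i₀) h)]
        rw [hBi, FMaux.dotp_smul_left]
      have hobj : dualObj f p.1 p.2 = ((-c₀ - t * c : ℝ) : EReal) := by
        rw [dualObj, hA, hc₀, hsum]
        norm_cast
      rw [hobj, hdot, ← EReal.coe_add]
      apply EReal.coe_le_coe_iff.2
      have htd : K - dotp u₀ x + c₀ ≤ t * d := by
        have h4 : ((K - dotp u₀ x + c₀) / d) * d ≤ t * d :=
          mul_le_mul_of_nonneg_right (le_max_right _ _) hd0.le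
        rwa [div_mul_cancel₀ _ (ne_of_gt hd0)] at h4
      have hde : t * d = t * dotp v x - t * c := by rw [hd]; ring
      nlinarith [htd]
  refine ⟨main, ?_⟩
  have h2 : ∀ x : Fin n → ℝ,
      (if ∀ i : Fin I, f i.succ x ≤ 0 then f 0 x else ⊤)
        = ⨅ _ : x ∈ primalFeas f, f 0 x := by
    intro x
    by_cases hfe : ∀ i : Fin I, f i.succ x ≤ 0
    · rw [if_pos hfe]
      by_cases htop : f 0 x = ⊤
      · have hx : x ∉ primalFeas f := fun h => h.2 htop
        rw [htop]
        exact (@iInf_neg EReal _ _ (fun _ => (⊤ : EReal)) hx).symm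
      · exact (@iInf_pos EReal _ (x ∈ primalFeas f) (fun _ => f 0 x) ⟨hfe, htop⟩).symm
    · rw [if_neg hfe]
      have hx : x ∉ primalFeas f := fun h => hfe h.1
      exact (@iInf_neg EReal _ (x ∈ primalFeas f) (fun _ => f 0 x) hx).symm
  have h5 : (⨅ x : Fin n → ℝ,
        (⨆ p ∈ {q : (Fin (I + 1) → Fin n → ℝ) × (Fin I → ℝ) | ∀ i, 0 ≤ q.2 i},
          dualObj f p.1 p.2 + ((∑ i : Fin (I + 1), dotp (p.1 i) x : ℝ) : EReal)))
      = ⨅ x : Fin n → ℝ, ⨅ _ : x ∈ primalFeas f, f 0 x :=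
    iInf_congr fun x => (main x).trans (h2 x)
  rw [h5]
  rfl
end
end

section
/- Equivalence of the dual uncertainty quantification problem and the ambiguous primal worst problem: under assumptions (G), (C), (H) and (S), the infima of (D-UQ) and (AP-W) coincide, and (D-UQ) is solvable if and only if (AP-W) is solvable. -/
noncomputable section
open scoped BigOperators Classical ENNReal
open MeasureTheory

/-- The concave perspective `t g(x/t)` of a function `g` with `−g` proper, closed and
convex, equal to `t g(x/t)` for `t > 0` and to `−δ*_{dom (−g)*}(x)` for `t = 0`. -/
def cpersp {n : ℕ} (g : (Fin n → ℝ) → EReal) (x : Fin n → ℝ) (t : ℝ) : EReal :=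
  if 0 < t then (t : EReal) * g (t⁻¹ • x)
  else - suppFn (edom (conjFn (fun z => - g z))) x

/-- Positive part of an extended real number, as an extended non-negative real. -/
def epos (x : EReal) : ℝ≥0∞ := if x = ⊤ then ⊤ else ENNReal.ofReal x.toReal

/-- Expectation `E_P[f(z̃)]` with the convention that it equals `−∞` whenever the
expectations of the positive and negative parts of `f(z̃)` are both infinite
(infeasibility dominates in maximization). -/
def lowExp {n : ℕ} (P : Measure (Fin n → ℝ)) (f : (Fin n → ℝ) → EReal) : EReal :=
  ((∫⁻ z, epos (f z) ∂P : ℝ≥0∞) : EReal) - ((∫⁻ z, epos (-(f z)) ∂P : ℝ≥0∞) : EReal)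

/-- Expectation `E_P[f(z̃)]` with the convention that it equals `+∞` whenever the
expectations of the positive and negative parts of `f(z̃)` are both infinite
(infeasibility dominates in the moment constraints). -/
def highExp {n : ℕ} (P : Measure (Fin n → ℝ)) (f : (Fin n → ℝ) → EReal) : EReal :=
  - lowExp P (fun z => - f z)

variable {dz I J L : ℕ}

/-- Assumption (G): `−g_i` is proper, closed and convex for each `i`. -/
def AssumptionG (gi : Fin I → (Fin dz → ℝ) → EReal) : Prop :=
  ∀ i, ProperFn (fun z => - gi i z) ∧ ClosedFn (fun z => - gi i z) ∧
    ConvexFn (fun z => - gi i z)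

/-- Assumption (C): each `c_ℓ` is proper, closed and convex. -/
def AssumptionC (c : Fin L → (Fin dz → ℝ) → EReal) : Prop :=
  ∀ ℓ, ProperFn (c ℓ) ∧ ClosedFn (c ℓ) ∧ ConvexFn (c ℓ)

/-- Assumption (H): each `h_j` is proper, closed and convex. -/
def AssumptionH (h : Fin J → (Fin dz → ℝ) → EReal) : Prop :=
  ∀ j, ProperFn (h j) ∧ ClosedFn (h j) ∧ ConvexFn (h j)

/-- The support set `S = {z : c_ℓ(z) ≤ 0 ∀ℓ}`. -/
def Sset (c : Fin L → (Fin dz → ℝ) → EReal) : Set (Fin dz → ℝ) :=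
  {z | ∀ ℓ, c ℓ z ≤ 0}

/-- The set `S̄_i = {z ∈ S : z ∈ dom h_j ∀j, z ∈ dom(−g_i)}`. -/
def SbarI (gi : Fin I → (Fin dz → ℝ) → EReal) (c : Fin L → (Fin dz → ℝ) → EReal)
    (h : Fin J → (Fin dz → ℝ) → EReal) (i : Fin I) : Set (Fin dz → ℝ) :=
  {z | z ∈ Sset c ∧ (∀ j, h j z < ⊤) ∧ ⊥ < gi i z}

/-- The effective support set `S̄ = ∪_i S̄_i`. -/
def Sbar (gi : Fin I → (Fin dz → ℝ) → EReal) (c : Fin L → (Fin dz → ℝ) → EReal)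
    (h : Fin J → (Fin dz → ℝ) → EReal) : Set (Fin dz → ℝ) :=
  ⋃ i, SbarI gi c h i

/-- Assumption (S): each `S̄_i` is nonempty. -/
def AssumptionS (gi : Fin I → (Fin dz → ℝ) → EReal)
    (c : Fin L → (Fin dz → ℝ) → EReal) (h : Fin J → (Fin dz → ℝ) → EReal) : Prop :=
  ∀ i, (SbarI gi c h i).Nonempty

/-- The disutility function `g(z) = max_i g_i(z)`. -/
def gFun (gi : Fin I → (Fin dz → ℝ) → EReal) (z : Fin dz → ℝ) : EReal :=
  ⨆ i, gi i z

/-- The ambiguity set `𝒫` of all probability distributions supported on `S`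
satisfying the moment conditions `E_P[h_j(z̃)] ≤ μ_j`. -/
def ambSet (c : Fin L → (Fin dz → ℝ) → EReal) (h : Fin J → (Fin dz → ℝ) → EReal)
    (μ : Fin J → ℝ) : Set (Measure (Fin dz → ℝ)) :=
  {P | IsProbabilityMeasure P ∧ P (Sset c) = 1 ∧
       ∀ j, highExp P (h j) ≤ ((μ j : ℝ) : EReal)}

/-- Optimal value of the primal uncertainty quantification problem (P-UQ). -/
def puqVal (gi : Fin I → (Fin dz → ℝ) → EReal) (c : Fin L → (Fin dz → ℝ) → EReal)
    (h : Fin J → (Fin dz → ℝ) → EReal) (μ : Fin J → ℝ) : EReal :=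
  ⨆ P ∈ {P | P ∈ ambSet c h μ ∧ lowExp P (gFun gi) ≠ ⊥}, lowExp P (gFun gi)

/-- Feasible region of the dual uncertainty quantification problem (D-UQ). -/
def duqFeas (gi : Fin I → (Fin dz → ℝ) → EReal) (c : Fin L → (Fin dz → ℝ) → EReal)
    (h : Fin J → (Fin dz → ℝ) → EReal) : Set (ℝ × (Fin J → ℝ)) :=
  {p | (∀ j, 0 ≤ p.2 j) ∧
       ∀ z ∈ Sbar gi c h, gFun gi z ≤ (p.1 : EReal) + ∑ j, (p.2 j : EReal) * h j z}

/-- Optimal value of the dual uncertainty quantification problem (D-UQ). -/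
def duqVal (gi : Fin I → (Fin dz → ℝ) → EReal) (c : Fin L → (Fin dz → ℝ) → EReal)
    (h : Fin J → (Fin dz → ℝ) → EReal) (μ : Fin J → ℝ) : EReal :=
  ⨅ p ∈ duqFeas gi c h, ((p.1 + dotp μ p.2 : ℝ) : EReal)

/-- (D-UQ) is solvable. -/
def duqSolvable (gi : Fin I → (Fin dz → ℝ) → EReal) (c : Fin L → (Fin dz → ℝ) → EReal)
    (h : Fin J → (Fin dz → ℝ) → EReal) (μ : Fin J → ℝ) : Prop :=
  duqFeas gi c h = ∅ ∨
    ∃ p ∈ duqFeas gi c h, ((p.1 + dotp μ p.2 : ℝ) : EReal) = duqVal gi c h μ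

/-- The augmented support set
`U_i = {(z,u,t) : c_ℓ(z) ≤ 0 ∀ℓ, h(z) ≤ u, g_i(z) ≥ t}`. -/
def Uset {dz I J L : ℕ} (gi : Fin I → (Fin dz → ℝ) → EReal)
    (c : Fin L → (Fin dz → ℝ) → EReal) (h : Fin J → (Fin dz → ℝ) → EReal)
    (i : Fin I) : Set ((Fin dz → ℝ) × (Fin J → ℝ) × ℝ) :=
  {q | (∀ ℓ, c ℓ q.1 ≤ 0) ∧ (∀ j, h j q.1 ≤ ((q.2.1 j : ℝ) : EReal)) ∧
       ((q.2.2 : ℝ) : EReal) ≤ gi i q.1}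

/-- Feasible region of the ambiguous primal worst problem (AP-W): `β ≥ 0` and
`sup_{(z,u,t) ∈ U_i} { t − α − uᵀβ } ≤ 0` for every `i`. -/
def apwFeas {dz I J L : ℕ} (gi : Fin I → (Fin dz → ℝ) → EReal)
    (c : Fin L → (Fin dz → ℝ) → EReal) (h : Fin J → (Fin dz → ℝ) → EReal) :
    Set (ℝ × (Fin J → ℝ)) :=
  {p | (∀ j, 0 ≤ p.2 j) ∧
       ∀ i, ∀ q ∈ Uset gi c h i, q.2.2 - p.1 - dotp q.2.1 p.2 ≤ 0}

/-- Optimal value of the ambiguous primal worst problem (AP-W). -/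
def apwVal {dz I J L : ℕ} (gi : Fin I → (Fin dz → ℝ) → EReal)
    (c : Fin L → (Fin dz → ℝ) → EReal) (h : Fin J → (Fin dz → ℝ) → EReal)
    (μ : Fin J → ℝ) : EReal :=
  ⨅ p ∈ apwFeas gi c h, ((p.1 + dotp μ p.2 : ℝ) : EReal)

/-- (AP-W) is solvable. -/
def apwSolvable {dz I J L : ℕ} (gi : Fin I → (Fin dz → ℝ) → EReal)
    (c : Fin L → (Fin dz → ℝ) → EReal) (h : Fin J → (Fin dz → ℝ) → EReal)
    (μ : Fin J → ℝ) : Prop :=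
  apwFeas gi c h = ∅ ∨
    ∃ p ∈ apwFeas gi c h, ((p.1 + dotp μ p.2 : ℝ) : EReal) = apwVal gi c h μ


lemma ereal_coe_sum' {ι : Type*} (s : Finset ι) (f : ι → ℝ) :
    ((∑ i ∈ s, f i : ℝ) : EReal) = ∑ i ∈ s, ((f i : ℝ) : EReal) :=
  map_sum (⟨⟨Real.toEReal, EReal.coe_zero⟩, EReal.coe_add⟩ : ℝ →+ EReal) f s

lemma duqFeas_eq_apwFeas {dz I J L : ℕ} (gi : Fin I → (Fin dz → ℝ) → EReal)
    (c : Fin L → (Fin dz → ℝ) → EReal) (h : Fin J → (Fin dz → ℝ) → EReal)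
    (hG : ∀ i z, gi i z ≠ ⊤) (hH : ∀ j, ProperFn (h j)) :
    duqFeas gi c h = apwFeas gi c h := by
  ext ⟨α, β⟩
  constructor
  · rintro ⟨hβ, hfe⟩
    refine ⟨hβ, ?_⟩
    rintro i ⟨z, u, t⟩ ⟨hcz, huz, htz⟩
    simp only at hcz huz htz ⊢
    have hzS : z ∈ Sbar gi c h := by
      refine Set.mem_iUnion.2 ⟨i, hcz, fun j => lt_of_le_of_lt (huz j) (EReal.coe_lt_top _),
        lt_of_lt_of_le (by exact EReal.bot_lt_coe t) htz⟩
    have key := hfe z hzS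
    have hreal : ∀ j, h j z = (((h j z).toReal : ℝ) : EReal) := fun j =>
      (EReal.coe_toReal (ne_top_of_le_ne_top (EReal.coe_ne_top (u j)) (huz j)) ((hH j).1 z)).symm
    have hle : ∀ j, (h j z).toReal ≤ u j := fun j => by
      have := huz j; rw [hreal j] at this; exact EReal.coe_le_coe_iff.1 this
    have hsum : (∑ j, (β j : EReal) * h j z) = ((∑ j, β j * (h j z).toReal : ℝ) : EReal) := by
      rw [ereal_coe_sum']
      refine Finset.sum_congr rfl fun j _ => ?_
      rw [EReal.coe_mul, ← hreal j]
    have key2 : (t : EReal) ≤ ((α + ∑ j, β j * (h j z).toReal : ℝ) : EReal) := by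
      calc (t : EReal) ≤ gi i z := htz
        _ ≤ gFun gi z := le_iSup (fun i => gi i z) i
        _ ≤ (α : EReal) + ∑ j, (β j : EReal) * h j z := key
        _ = _ := by rw [hsum, ← EReal.coe_add]
    have key3 : t ≤ α + ∑ j, β j * (h j z).toReal := EReal.coe_le_coe_iff.1 key2
    have hdot : ∑ j, β j * (h j z).toReal ≤ dotp u β := by
      unfold dotp
      refine Finset.sum_le_sum fun j _ => ?_
      rw [mul_comm (u j)]
      exact mul_le_mul_of_nonneg_left (hle j) (hβ j)
    linarith
  · rintro ⟨hβ, hfe⟩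
    refine ⟨hβ, ?_⟩
    intro z hz
    obtain ⟨i, hzS, hzh, _⟩ := Set.mem_iUnion.1 hz
    rw [gFun, iSup_le_iff]
    intro i'
    rcases eq_or_ne (gi i' z) ⊥ with hb | hb
    · rw [hb]; exact bot_le
    · have hgr : gi i' z = (((gi i' z).toReal : ℝ) : EReal) := (EReal.coe_toReal (hG i' z) hb).symm
      have hreal : ∀ j, h j z = (((h j z).toReal : ℝ) : EReal) := fun j =>
        (EReal.coe_toReal (hzh j).ne ((hH j).1 z)).symm
      have hq : (⟨z, fun j => (h j z).toReal, (gi i' z).toReal⟩ :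
          (Fin dz → ℝ) × (Fin J → ℝ) × ℝ) ∈ Uset gi c h i' :=
        ⟨hzS, fun j => (hreal j).le, hgr.ge⟩
      have hth := hfe i' _ hq
      simp only at hth
      have hle' : (gi i' z).toReal ≤ α + ∑ j, β j * (h j z).toReal := by
        have hd : dotp (fun j => (h j z).toReal) β = ∑ j, β j * (h j z).toReal := by
          unfold dotp; exact Finset.sum_congr rfl fun j _ => mul_comm _ _
        rw [hd] at hth; linarith
      calc gi i' z = (((gi i' z).toReal : ℝ) : EReal) := hgr
        _ ≤ ((α + ∑ j, β j * (h j z).toReal : ℝ) : EReal) := EReal.coe_le_coe_iff.2 hle'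
        _ = (α : EReal) + ∑ j, (β j : EReal) * h j z := by
            rw [EReal.coe_add]; congr 1
            rw [ereal_coe_sum']
            refine Finset.sum_congr rfl fun j _ => ?_
            rw [EReal.coe_mul, ← hreal j]

/-- **Equivalence of (D-UQ) and (AP-W)** (Proposition 4.1): under assumptions (G), (C),
(H) and (S), the infima of (D-UQ) and (AP-W) coincide, and (D-UQ) is solvable if and
only if (AP-W) is solvable. -/
theorem duq_eq_apw (dz I J L : ℕ)
    (gi : Fin I → (Fin dz → ℝ) → EReal) (c : Fin L → (Fin dz → ℝ) → EReal)
    (h : Fin J → (Fin dz → ℝ) → EReal) (μ : Fin J → ℝ)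
    (hG : AssumptionG gi) (hC : AssumptionC c) (hH : AssumptionH h)
    (hS : AssumptionS gi c h) (hSne : (Sset c).Nonempty) :
    duqVal gi c h μ = apwVal gi c h μ ∧
    (duqSolvable gi c h μ ↔ apwSolvable gi c h μ) := by
  have hGtop : ∀ i z, gi i z ≠ ⊤ := fun i z hz => (hG i).1.1 z (by simp only []; rw [hz]; rfl)
  have hfeq := duqFeas_eq_apwFeas gi c h hGtop (fun j => (hH j).1)
  constructor
  · unfold duqVal apwVal; rw [hfeq]
  · unfold duqSolvable apwSolvable duqVal apwVal; rw [hfeq]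
end
end

section
/- Growth of non-negative convex functions: if f : ℝ^d → [0,+∞] is lower semicontinuous and convex and satisfies f(z) = 0 if and only if z = 0, then there exists δ > 0 such that f(z) ≥ δ‖z‖₂ − 1 for all z ∈ ℝ^d. -/
noncomputable section

/-- **Growth of non-negative convex functions.**
If `f : ℝ^d → [0,+∞]` is lower semicontinuous and convex (in the extended-real sense,
i.e. its epigraph is convex) and satisfies `f z = 0` if and only if `z = 0`, then there
exists `δ > 0` such that `f z ≥ δ‖z‖₂ − 1` for all `z`. -/
theorem growth_of_nonneg_convex (d : ℕ) (f : EuclideanSpace ℝ (Fin d) → EReal)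
    (hconv : Convex ℝ {p : EuclideanSpace ℝ (Fin d) × ℝ | f p.1 ≤ (p.2 : EReal)})
    (hlsc : LowerSemicontinuous f)
    (hnonneg : ∀ z, 0 ≤ f z)
    (hzero : ∀ z, f z = 0 ↔ z = 0) :
    ∃ δ : ℝ, 0 < δ ∧ ∀ z, ((δ * ‖z‖ - 1 : ℝ) : EReal) ≤ f z := by
  have hf0 : f 0 = 0 := (hzero 0).2 rfl
  by_cases hd : (Metric.sphere (0 : EuclideanSpace ℝ (Fin d)) 1).Nonempty
  · set S := Metric.sphere (0 : EuclideanSpace ℝ (Fin d)) 1 with hSdef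
    have hS : IsCompact S := isCompact_sphere _ _
    set U : ℕ → Set (EuclideanSpace ℝ (Fin d)) :=
      fun n => {x | ((1/(n+1) : ℝ) : EReal) < f x} with hUdef
    have hUo : ∀ n, IsOpen (U n) := fun n => hlsc.isOpen_preimage _
    have hcover : S ⊆ ⋃ n, U n := by
      intro w hw
      have hw0 : w ≠ 0 := by
        intro h
        rw [h, mem_sphere_zero_iff_norm, norm_zero] at hw
        exact one_ne_zero hw.symm
      have hpos : 0 < f w :=
        (hnonneg w).lt_of_ne (fun h => hw0 ((hzero w).1 h.symm))
      obtain ⟨c', h0c, hcf⟩ := exists_between hpos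
      have hct : c' ≠ ⊤ := (lt_of_lt_of_le hcf le_top).ne
      have hcb : c' ≠ ⊥ := (lt_trans (by simp : (⊥:EReal) < 0) h0c).ne'
      lift c' to ℝ using ⟨hct, hcb⟩
      have hr : (0:ℝ) < c' := by exact_mod_cast h0c
      obtain ⟨n, hn⟩ := exists_nat_one_div_lt hr
      refine Set.mem_iUnion.2 ⟨n, ?_⟩
      have : ((1/(n+1) : ℝ) : EReal) < (c' : EReal) := by exact_mod_cast hn
      exact lt_trans this hcf
    obtain ⟨t, ht⟩ := hS.elim_finite_subcover U hUo hcover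
    set N := t.sup id with hN
    set c : ℝ := 1/(N+1) with hc
    have hc0 : (0:ℝ) < c := by positivity
    have hcS : ∀ w ∈ S, ((c : ℝ) : EReal) ≤ f w := by
      intro w hw
      obtain ⟨n, hn, hwn⟩ := Set.mem_iUnion₂.1 (ht hw)
      have h1 : (c : ℝ) ≤ 1/(n+1) := by
        apply one_div_le_one_div_of_le (by positivity)
        have : n ≤ N := Finset.le_sup (f := id) hn
        exact_mod_cast Nat.succ_le_succ this
      calc ((c:ℝ) : EReal) ≤ ((1/(n+1) : ℝ) : EReal) := by exact_mod_cast h1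
        _ ≤ f w := le_of_lt hwn
    refine ⟨min c 1, lt_min hc0 one_pos, fun z => ?_⟩
    set δ := min c 1 with hδ
    have hδ0 : 0 < δ := lt_min hc0 one_pos
    rcases le_or_gt ‖z‖ 1 with h1 | h1
    · have hle : δ * ‖z‖ - 1 ≤ 0 := by
        have : δ * ‖z‖ ≤ 1 * 1 :=
          mul_le_mul (min_le_right _ _) h1 (norm_nonneg z) zero_le_one
        linarith
      calc ((δ * ‖z‖ - 1 : ℝ) : EReal) ≤ ((0:ℝ) : EReal) := by exact_mod_cast hle
        _ = (0 : EReal) := EReal.coe_zero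
        _ ≤ f z := hnonneg z
    · by_contra hlt
      push_neg at hlt
      have hzt : f z ≠ ⊤ := hlt.ne_top
      have hzb : f z ≠ ⊥ := (lt_of_lt_of_le (by simp : (⊥:EReal) < 0) (hnonneg z)).ne'
      set s := (f z).toReal with hs
      have hseq : (s : EReal) = f z := EReal.coe_toReal hzt hzb
      have hr0 : (0:ℝ) < ‖z‖ := lt_trans one_pos h1
      have hp : (z, s) ∈ {p : EuclideanSpace ℝ (Fin d) × ℝ | f p.1 ≤ (p.2 : EReal)} :=
        le_of_eq hseq.symm
      have hq : ((0 : EuclideanSpace ℝ (Fin d)), (0:ℝ)) ∈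
          {p : EuclideanSpace ℝ (Fin d) × ℝ | f p.1 ≤ (p.2 : EReal)} := by
        simp only [Set.mem_setOf_eq, hf0, EReal.coe_zero, le_refl]
      have ha : (0:ℝ) ≤ 1/‖z‖ := by positivity
      have hb : (0:ℝ) ≤ 1 - 1/‖z‖ := by
        have : 1/‖z‖ ≤ 1 := by
          rw [div_le_one hr0]; exact h1.le
        linarith
      have hab : 1/‖z‖ + (1 - 1/‖z‖) = 1 := by ring
      have key := hconv hp hq ha hb hab
      simp only [Prod.smul_mk, smul_zero, Prod.mk_add_mk, add_zero, smul_eq_mul,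
        mul_zero, Set.mem_setOf_eq] at key
      -- key : f ((1/‖z‖) • z) ≤ ((1/‖z‖) * s : ℝ)
      have hwS : (1/‖z‖) • z ∈ S := by
        rw [hSdef, mem_sphere_zero_iff_norm, norm_smul]
        simp [abs_of_pos (by positivity : (0:ℝ) < 1/‖z‖), one_div, inv_mul_cancel₀ hr0.ne']
      have hcle : ((c:ℝ) : EReal) ≤ ((1/‖z‖ * s : ℝ) : EReal) :=
        le_trans (hcS _ hwS) key
      have hcle' : c ≤ 1/‖z‖ * s := by exact_mod_cast hcle
      have hsge : c * ‖z‖ ≤ s := by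
        have := mul_le_mul_of_nonneg_right hcle' hr0.le
        rw [mul_comm c ‖z‖]
        calc ‖z‖ * c ≤ (1/‖z‖ * s) * ‖z‖ := by linarith
          _ = s := by field_simp
      have hfin : ((δ * ‖z‖ - 1 : ℝ) : EReal) < (s : EReal) := by
        have : δ * ‖z‖ - 1 < s := by
          have hδc : δ ≤ c := min_le_left _ _
          nlinarith [norm_nonneg z]
        exact_mod_cast this
      rw [hseq] at hfin
      exact absurd hlt (not_lt.2 hfin.le)
  · refine ⟨1, one_pos, fun z => ?_⟩
    have hz : z = 0 := by
      by_contra h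
      exact hd ⟨(‖z‖⁻¹ • z), by
        rw [mem_sphere_zero_iff_norm, norm_smul, norm_inv, norm_norm,
          inv_mul_cancel₀ (norm_ne_zero_iff.2 h)]⟩
    subst hz
    rw [hf0]
    simp only [norm_zero, mul_zero, zero_sub]
    exact EReal.coe_zero ▸ EReal.coe_le_coe_iff.2 (by norm_num)
end
end
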